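/- Let G be a finite simple graph whose edge set can be partitioned into at most α forests (i.e., G has arboricity at most α). Then the sum over all edges (u,v) of min(deg(u), deg(v)) is at most 2·m·α, where m is the number of edges of G. -/

import Mathlib

open SimpleGraph

lemma first_edge_eq {V : Type*} {H : SimpleGraph V} {u w x : V} (p : H.Walk u w)
    (hp : p.IsPath) (he : s(u, x) ∈ p.edges) : x = p.getVert 1 := by
  cases p with
  | nil => simp at he
  | cons h' p' =>
    rename_i y
    rw [SimpleGraph.Walk.edges_cons, List.mem_cons] at he
    rcases he with he | he
    · have hx : x = y := by
        rcases Sym2.eq_iff.mp he with ⟨-, h⟩ | ⟨h1, h2⟩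
        · exact h
        · exact h2.trans h1
      subst hx
      simp
    · exact absurd (p'.fst_mem_support_of_mem_edges he)
        ((SimpleGraph.Walk.cons_isPath_iff _ _).mp hp).2

lemma exists_leaf {V : Type*} [Fintype V] {H : SimpleGraph V} (hH : H.IsAcyclic)
    {a b : V} (hab : H.Adj a b) :
    ∃ u s, H.Adj u s ∧ ∀ x, H.Adj u x → x = s := by
  classical
  set P : Set ℕ := {n | ∃ (u w : V) (p : H.Walk u w), p.IsPath ∧ p.length = n} with hP
  have h1P : 1 ∈ P := by
    refine ⟨a, b, SimpleGraph.Walk.cons hab SimpleGraph.Walk.nil, ?_, rfl⟩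
    simp [SimpleGraph.Walk.cons_isPath_iff, hab.ne]
  have hbdd : BddAbove P := by
    refine ⟨Fintype.card V, ?_⟩
    rintro n ⟨u, w, p, hp, rfl⟩
    exact hp.length_lt.le
  obtain ⟨u, w, p, hp, hlen⟩ := Nat.sSup_mem ⟨1, h1P⟩ hbdd
  have h1 : 1 ≤ p.length := by
    have h2 : (1 : ℕ) ≤ sSup P := le_csSup hbdd h1P
    omega
  have hadj : H.Adj u (p.getVert 1) := by
    simpa using p.adj_getVert_succ (i := 0) (by omega)
  refine ⟨u, p.getVert 1, hadj, ?_⟩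
  intro x hx
  by_cases hmem : s(u, x) ∈ p.edges
  · exact first_edge_eq p hp hmem
  by_cases hsup : x ∈ p.support
  · exfalso
    have hq : (p.takeUntil x hsup).IsPath := hp.takeUntil hsup
    have hne : ¬ s(x, u) ∈ (p.takeUntil x hsup).edges := fun hc =>
      hmem (p.edges_takeUntil_subset hsup (by rwa [Sym2.eq_swap] at hc))
    exact hH (SimpleGraph.Walk.cons hx.symm (p.takeUntil x hsup))
      ((SimpleGraph.Walk.cons_isCycle_iff _ _).mpr ⟨hq, hne⟩)
  · have hext : (SimpleGraph.Walk.cons hx.symm p).IsPath := by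
      rw [SimpleGraph.Walk.cons_isPath_iff]; exact ⟨hp, hsup⟩
    have h2 : p.length + 1 ∈ P := ⟨x, w, SimpleGraph.Walk.cons hx.symm p, hext, by simp⟩
    have := le_csSup hbdd h2
    omega

lemma exists_injOn_aux {V : Type*} [Fintype V] :
    ∀ (n : ℕ) (H : SimpleGraph V), H.edgeSet.ncard = n → H.IsAcyclic →
      ∃ φ : Sym2 V → V, (∀ e ∈ H.edgeSet, φ e ∈ e) ∧ Set.InjOn φ H.edgeSet := by
  intro n
  induction n using Nat.strong_induction_on with
  | _ n ih =>
    intro H hcard hH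
    classical
    rcases Set.eq_empty_or_nonempty H.edgeSet with hemp | ⟨e0, he0⟩
    · exact ⟨fun e => (Quot.out e).1, by simp [hemp], by simp [hemp]⟩
    · have hab : ∃ a b, H.Adj a b := by
        induction e0 using Sym2.ind with
        | _ a b => exact ⟨a, b, he0⟩
      obtain ⟨a, b, hab⟩ := hab
      obtain ⟨u, s, hus, huniq⟩ := exists_leaf hH hab
      have hkey : s(u, s) ∈ H.edgeSet := hus
      have hes : (H.deleteEdges {s(u, s)}).edgeSet = H.edgeSet \ {s(u, s)} :=
        SimpleGraph.edgeSet_deleteEdges _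
      have hH' : (H.deleteEdges {s(u, s)}).IsAcyclic := fun v c hc =>
        hH (c.mapLe (SimpleGraph.deleteEdges_le _)) (hc.mapLe _)
      have hfin : H.edgeSet.Finite := Set.toFinite _
      have hpos : 1 ≤ n := by
        rw [← hcard]
        exact (Set.ncard_pos hfin).mpr ⟨_, hkey⟩
      have hcard' : (H.deleteEdges {s(u, s)}).edgeSet.ncard = n - 1 := by
        rw [hes, Set.ncard_diff_singleton_of_mem hkey, hcard]
      obtain ⟨φ', hmem', hinj'⟩ := ih (n - 1) (by omega) _ hcard' hH'
      have hu_e : ∀ e ∈ H.edgeSet, u ∈ e → e = s(u, s) := by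
        intro e he hue
        induction e using Sym2.ind with
        | _ a b =>
          rw [Sym2.mem_iff] at hue
          rw [SimpleGraph.mem_edgeSet] at he
          rcases hue with rfl | rfl
          · rw [huniq b he]
          · rw [huniq a he.symm, Sym2.eq_swap]
      refine ⟨Function.update φ' s(u, s) u, ?_, ?_⟩
      · intro e he
        by_cases h : e = s(u, s)
        · subst h; simp
        · rw [Function.update_of_ne h]
          exact hmem' e (hes ▸ ⟨he, h⟩)
      · intro e1 h1 e2 h2 heq
        by_cases k1 : e1 = s(u, s) <;> by_cases k2 : e2 = s(u, s)
        · rw [k1, k2]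
        · exfalso
          rw [k1, Function.update_self, Function.update_of_ne k2] at heq
          have h2' : e2 ∈ (H.deleteEdges {s(u, s)}).edgeSet := hes ▸ ⟨h2, k2⟩
          have : u ∈ e2 := heq ▸ hmem' e2 h2'
          exact k2 (hu_e e2 h2 this)
        · exfalso
          rw [k2, Function.update_self, Function.update_of_ne k1] at heq
          have h1' : e1 ∈ (H.deleteEdges {s(u, s)}).edgeSet := hes ▸ ⟨h1, k1⟩
          have : u ∈ e1 := heq ▸ hmem' e1 h1'
          exact k1 (hu_e e1 h1 this)
        · rw [Function.update_of_ne k1, Function.update_of_ne k2] at heq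
          exact hinj' (hes ▸ ⟨h1, k1⟩) (hes ▸ ⟨h2, k2⟩) heq

lemma exists_injOn {V : Type*} [Fintype V] (H : SimpleGraph V) (hH : H.IsAcyclic) :
    ∃ φ : Sym2 V → V, (∀ e ∈ H.edgeSet, φ e ∈ e) ∧ Set.InjOn φ H.edgeSet :=
  exists_injOn_aux _ H rfl hH

/-- `G` has arboricity at most `α`: its edge set can be partitioned into at most `α` forests. -/
def HasArboricityLE {V : Type*} (G : SimpleGraph V) (α : ℕ) : Prop :=
  ∃ f : Sym2 V → Fin α,
    ∀ i : Fin α, (SimpleGraph.fromEdgeSet {e | e ∈ G.edgeSet ∧ f e = i}).IsAcyclic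

theorem chiba_nishizeki {V : Type*} [Fintype V] [DecidableEq V]
    (G : SimpleGraph V) [DecidableRel G.Adj] (α : ℕ) (hG : HasArboricityLE G α) :
    ∑ e ∈ G.edgeFinset,
        Sym2.lift ⟨fun u v => min (G.degree u) (G.degree v), fun u v => min_comm _ _⟩ e
      ≤ 2 * G.edgeFinset.card * α := by
  classical
  obtain ⟨f, hf⟩ := hG
  set md : Sym2 V → ℕ :=
    Sym2.lift ⟨fun u v => min (G.degree u) (G.degree v), fun u v => min_comm _ _⟩ with hmd
  have key : ∀ i : Fin α,
      ∑ e ∈ G.edgeFinset.filter (fun e => f e = i), md e ≤ 2 * G.edgeFinset.card := by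
    intro i
    obtain ⟨φ, hφmem, hφinj⟩ := exists_injOn _ (hf i)
    have hsub : ∀ e ∈ G.edgeFinset.filter (fun e => f e = i),
        e ∈ (SimpleGraph.fromEdgeSet {e | e ∈ G.edgeSet ∧ f e = i}).edgeSet := by
      intro e he
      rw [Finset.mem_filter, SimpleGraph.mem_edgeFinset] at he
      rw [SimpleGraph.edgeSet_fromEdgeSet]
      exact ⟨⟨he.1, he.2⟩, G.not_isDiag_of_mem_edgeSet he.1⟩
    calc ∑ e ∈ G.edgeFinset.filter (fun e => f e = i), md e
        ≤ ∑ e ∈ G.edgeFinset.filter (fun e => f e = i), G.degree (φ e) := by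
          refine Finset.sum_le_sum ?_
          intro e he
          have hin : φ e ∈ e := hφmem e (hsub e he)
          revert hin
          induction e using Sym2.ind with
          | _ a b =>
            intro hin
            rw [Sym2.mem_iff] at hin
            rcases hin with h | h <;> rw [h]
            · simpa [hmd] using min_le_left _ _
            · simpa [hmd] using min_le_right _ _
      _ = ∑ v ∈ (G.edgeFinset.filter (fun e => f e = i)).image φ, G.degree v := by
          rw [Finset.sum_image (fun x hx y hy hxy => hφinj (hsub x hx) (hsub y hy) hxy)]
      _ ≤ ∑ v, G.degree v := Finset.sum_le_sum_of_subset (Finset.subset_univ _)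
      _ = 2 * G.edgeFinset.card := G.sum_degrees_eq_twice_card_edges
  calc ∑ e ∈ G.edgeFinset, md e
      = ∑ i : Fin α, ∑ e ∈ G.edgeFinset.filter (fun e => f e = i), md e :=
        (Finset.sum_fiberwise_of_maps_to (fun e _ => Finset.mem_univ (f e)) md).symm
    _ ≤ ∑ _i : Fin α, 2 * G.edgeFinset.card := Finset.sum_le_sum fun i _ => key i
    _ = 2 * G.edgeFinset.card * α := by
        simp [Finset.sum_const, mul_comm]
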